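/- Let p > 0 and let Y be a geometric random variable with parameter θ ∈ (0,1), i.e. 𝐏(Y = k) = (1−θ)^k θ for integers k ≥ 0. Setting λ = −ln(1−θ), one has 𝐄[Y^p] ≤ C_p · θ/λ^{p+1} + 1, where C_p is a positive finite constant depending only on p (not on θ); explicitly one may take C_p = p^{p+1} e^{−p} + Γ(p+1). -/

import Mathlib

open MeasureTheory ProbabilityTheory

section Aux

open Real Set

variable {p l : ℝ}

private lemma aux_cont (hp : 0 < p) :
    Continuous (fun x : ℝ => x ^ p * Real.exp (-l * x)) :=
  (Real.continuous_rpow_const hp.le).mul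
    (Real.continuous_exp.comp (continuous_const.mul continuous_id))

private lemma aux_hasDeriv (hp : 0 < p) {x : ℝ} (hx : 0 < x) :
    HasDerivAt (fun x : ℝ => x ^ p * Real.exp (-l * x))
      ((p - l * x) * (x ^ (p - 1) * Real.exp (-l * x))) x := by
  have h1 : HasDerivAt (fun x : ℝ => x ^ p) (p * x ^ (p - 1)) x :=
    Real.hasDerivAt_rpow_const (Or.inl hx.ne')
  have h2 : HasDerivAt (fun x : ℝ => Real.exp (-l * x)) (-l * Real.exp (-l * x)) x := by
    simpa [mul_comm] using (((hasDerivAt_id x).const_mul (-l)).exp)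
  have h3 := h1.mul h2
  refine h3.congr_deriv ?_
  have hxp : x ^ p = x ^ (p - 1) * x := by
    rw [← Real.rpow_add_one hx.ne' (p - 1), sub_add_cancel]
  rw [hxp]; ring

private lemma aux_mono (hp : 0 < p) (hl : 0 < l) :
    MonotoneOn (fun x : ℝ => x ^ p * Real.exp (-l * x)) (Icc 0 (p / l)) := by
  apply monotoneOn_of_deriv_nonneg (convex_Icc 0 (p / l)) (aux_cont hp).continuousOn
  · intro x hx
    rw [interior_Icc] at hx
    exact ((aux_hasDeriv hp hx.1).differentiableAt).differentiableWithinAt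
  · intro x hx
    rw [interior_Icc] at hx
    rw [(aux_hasDeriv hp hx.1).deriv]
    have h1 : 0 ≤ p - l * x := by
      have := hx.2
      rw [lt_div_iff₀ hl] at this
      nlinarith
    have h2 : (0:ℝ) ≤ x ^ (p - 1) := Real.rpow_nonneg hx.1.le _
    have h3 := Real.exp_pos (-l * x)
    exact mul_nonneg h1 (mul_nonneg h2 h3.le)

private lemma aux_anti (hp : 0 < p) (hl : 0 < l) :
    AntitoneOn (fun x : ℝ => x ^ p * Real.exp (-l * x)) (Ici (p / l)) := by
  have hm : 0 < p / l := div_pos hp hl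
  apply antitoneOn_of_deriv_nonpos (convex_Ici (p / l)) (aux_cont hp).continuousOn
  · intro x hx
    rw [interior_Ici] at hx
    exact ((aux_hasDeriv hp (lt_trans hm hx)).differentiableAt).differentiableWithinAt
  · intro x hx
    rw [interior_Ici] at hx
    have hx0 : 0 < x := lt_trans hm hx
    rw [(aux_hasDeriv hp hx0).deriv]
    have h1 : p - l * x ≤ 0 := by
      have hx' : p / l < x := hx
      rw [div_lt_iff₀ hl] at hx'
      nlinarith
    have h2 : (0:ℝ) ≤ x ^ (p - 1) := Real.rpow_nonneg hx0.le _
    have h3 := Real.exp_pos (-l * x)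
    exact mul_nonpos_iff.2 (Or.inr ⟨h1, mul_nonneg h2 h3.le⟩)

private lemma aux_le_sup (hp : 0 < p) (hl : 0 < l) {x : ℝ} (hx : 0 ≤ x) :
    x ^ p * Real.exp (-l * x) ≤ (p / l) ^ p * Real.exp (-l * (p / l)) := by
  have hm : 0 < p / l := div_pos hp hl
  rcases le_total x (p / l) with h | h
  · exact aux_mono hp hl ⟨hx, h⟩ ⟨hm.le, le_refl _⟩ h
  · exact aux_anti hp hl Set.self_mem_Ici h h

private lemma aux_sup_eq (hp : 0 < p) (hl : 0 < l) :
    (p / l) ^ p * Real.exp (-l * (p / l)) = (p / l) ^ p * Real.exp (-p) := by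
  congr 1
  rw [neg_mul, mul_div_cancel₀ p hl.ne']

private lemma aux_integrableOn (hp : 0 < p) (hl : 0 < l) :
    IntegrableOn (fun x : ℝ => x ^ p * Real.exp (-l * x)) (Ioi 0) := by
  have h := integrableOn_rpow_mul_exp_neg_mul_rpow (p := 1) (s := p) (by linarith) zero_lt_one hl
  exact h.congr_fun (fun x _ => by simp) measurableSet_Ioi

private lemma aux_integral (hp : 0 < p) (hl : 0 < l) :
    ∫ x in Ioi (0:ℝ), x ^ p * Real.exp (-l * x) = Real.Gamma (p + 1) / l ^ (p + 1) := by
  have h := integral_rpow_mul_exp_neg_mul_Ioi (show (0:ℝ) < p + 1 by linarith) hl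
  simp only [add_sub_cancel_right, ← neg_mul] at h
  rw [h, Real.div_rpow zero_le_one hl.le, Real.one_rpow]
  ring

private lemma aux_sum_le (hp : 0 < p) (hl : 0 < l) (n : ℕ) :
    ∑ k ∈ Finset.range n, ((k:ℝ) ^ p * Real.exp (-l * (k:ℝ)))
      ≤ (p / l) ^ p * Real.exp (-p)
        + ∫ x in Ioi (0:ℝ), x ^ p * Real.exp (-l * x) := by
  set f : ℝ → ℝ := fun x => x ^ p * Real.exp (-l * x) with hf_def
  have hm : 0 < p / l := div_pos hp hl
  set m : ℝ := p / l with hm_def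
  have hfi : ∀ c d : ℝ, IntervalIntegrable f volume c d :=
    fun c d => (aux_cont hp).intervalIntegrable c d
  have hf0 : ∀ x : ℝ, 0 ≤ x → 0 ≤ f x := fun x hx =>
    mul_nonneg (Real.rpow_nonneg hx _) (Real.exp_pos _).le
  have key : ∀ (c B : ℝ), (∀ x ∈ Icc c (c + 1), B ≤ f x) → B ≤ ∫ x in c..(c + 1), f x := by
    intro c B hB
    have h := intervalIntegral.integral_mono_on (by linarith : c ≤ c + 1)
      intervalIntegrable_const (hfi c (c + 1)) hB
    simpa using h
  have hsup : ∀ x : ℝ, 0 ≤ x → f x ≤ f m := fun x hx => aux_le_sup hp hl hx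
  set a : ℕ := ⌊m⌋₊ with ha_def
  have ha1 : (a : ℝ) ≤ m := Nat.floor_le hm.le
  have ha2 : m < (a : ℝ) + 1 := Nat.lt_floor_add_one m
  have hmono : ∑ k ∈ Finset.range n, f k ≤ ∑ k ∈ Finset.range (a + 2 + n), f k :=
    Finset.sum_le_sum_of_subset_of_nonneg (Finset.range_subset_range.2 (by omega))
      (fun k _ _ => hf0 _ (Nat.cast_nonneg k))
  refine le_trans hmono ?_
  rw [Finset.sum_range_add, Finset.sum_range_succ, Finset.sum_range_succ]
  -- left part
  have S1 : ∑ k ∈ Finset.range a, f k ≤ ∫ x in ((0:ℕ):ℝ)..((a:ℕ):ℝ), f x := by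
    rw [← intervalIntegral.sum_integral_adjacent_intervals
      (a := fun i : ℕ => (i:ℝ)) (fun k _ => hfi _ _)]
    refine Finset.sum_le_sum fun k hk => ?_
    have hk' : (k:ℝ) + 1 ≤ a := by
      have := Finset.mem_range.1 hk
      exact_mod_cast Nat.succ_le_of_lt this
    have hb : ∀ x ∈ Icc (k:ℝ) ((k:ℝ) + 1), f k ≤ f x := by
      intro x hx
      refine aux_mono hp hl ⟨Nat.cast_nonneg k, by linarith⟩
        ⟨by have := Nat.cast_nonneg (α := ℝ) k; linarith [hx.1], by linarith [hx.2]⟩ hx.1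
    have := key (k:ℝ) (f k) hb
    convert this using 2
    · rfl
    push_cast
    ring
  -- middle part
  have hfa : f a ≤ f m := hsup _ (Nat.cast_nonneg a)
  have hfa1 : f ((a:ℕ) + 1 : ℕ) ≤ f m := hsup _ (Nat.cast_nonneg _)
  have hBle : ∀ x ∈ Icc (a:ℝ) ((a:ℝ) + 1), min (f a) (f ((a + 1 : ℕ))) ≤ f x := by
    intro x hx
    rcases le_total x m with h | h
    · refine le_trans (min_le_left _ _)
        (aux_mono hp hl ⟨Nat.cast_nonneg a, ha1⟩
          ⟨by linarith [hx.1, Nat.cast_nonneg (α := ℝ) a], h⟩ hx.1)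
    · refine le_trans (min_le_right _ _) (aux_anti hp hl h ?_ ?_)
      · simp only [Set.mem_Ici]; push_cast; linarith
      · push_cast; linarith [hx.2]
  have S2 : f a + f ((a + 1 : ℕ)) ≤ f m + ∫ x in (a:ℝ)..((a:ℝ) + 1), f x := by
    have h1 := key (a:ℝ) _ hBle
    rcases le_total (f a) (f ((a + 1 : ℕ))) with h | h
    · rw [min_eq_left h] at h1; linarith
    · rw [min_eq_right h] at h1; linarith
  -- right part
  have S3 : ∑ k ∈ Finset.range n, f ((a + 2 + k : ℕ))
      ≤ ∫ x in ((a + 1 : ℕ):ℝ)..((a + 1 + n : ℕ):ℝ), f x := by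
    rw [← intervalIntegral.sum_integral_adjacent_intervals
      (a := fun i : ℕ => ((a + 1 + i : ℕ):ℝ)) (fun k _ => hfi _ _)]
    refine Finset.sum_le_sum fun k hk => ?_
    have hb : ∀ x ∈ Icc ((a + 1 + k : ℕ):ℝ) (((a + 1 + k : ℕ):ℝ) + 1),
        f ((a + 2 + k : ℕ)) ≤ f x := by
      intro x hx
      have hx1 : m ≤ x := by
        refine le_trans ha2.le (le_trans ?_ hx.1)
        push_cast; linarith
      refine aux_anti hp hl hx1 (le_trans hx1 ?_) ?_
      · push_cast at hx ⊢; linarith [hx.2]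
      · push_cast at hx ⊢; linarith [hx.2]
    have := key _ _ hb
    convert this using 2
    · rfl
    push_cast
    ring
  have C1 : (∫ x in ((0:ℕ):ℝ)..((a:ℕ):ℝ), f x) + (∫ x in (a:ℝ)..((a:ℝ) + 1), f x)
      + (∫ x in ((a + 1 : ℕ):ℝ)..((a + 1 + n : ℕ):ℝ), f x)
      = ∫ x in (0:ℝ)..((a + 1 + n : ℕ):ℝ), f x := by
    push_cast
    rw [intervalIntegral.integral_add_adjacent_intervals (hfi _ _) (hfi _ _),
      intervalIntegral.integral_add_adjacent_intervals (hfi _ _) (hfi _ _)]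
  have C2 : ∫ x in (0:ℝ)..((a + 1 + n : ℕ):ℝ), f x ≤ ∫ x in Ioi (0:ℝ), f x := by
    rw [intervalIntegral.integral_of_le (Nat.cast_nonneg _)]
    refine setIntegral_mono_set (aux_integrableOn hp hl) ?_
      (Ioc_subset_Ioi_self.eventuallyLE)
    exact (ae_restrict_iff' measurableSet_Ioi).2
      (Filter.Eventually.of_forall fun x hx => hf0 x (le_of_lt hx))
  have := aux_sup_eq hp hl
  calc (∑ k ∈ Finset.range a, f k) + f a + f ((a + 1 : ℕ))
        + ∑ k ∈ Finset.range n, f ((a + 2 + k : ℕ))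
      ≤ (∫ x in ((0:ℕ):ℝ)..((a:ℕ):ℝ), f x)
          + (f m + ∫ x in (a:ℝ)..((a:ℝ) + 1), f x)
          + (∫ x in ((a + 1 : ℕ):ℝ)..((a + 1 + n : ℕ):ℝ), f x) := by
        linarith
    _ = f m + (∫ x in (0:ℝ)..((a + 1 + n : ℕ):ℝ), f x) := by rw [← C1]; ring
    _ ≤ f m + ∫ x in Ioi (0:ℝ), f x := by linarith
    _ = (p / l) ^ p * Real.exp (-p) + ∫ x in Ioi (0:ℝ), f x := by
        rw [show f m = (p / l) ^ p * Real.exp (-l * (p / l)) from rfl, aux_sup_eq hp hl]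

end Aux

/-- **Proposition 7.1**: if `Y` is geometric with parameter `θ ∈ (0,1)`, i.e.
`𝐏(Y = k) = (1-θ)^k θ` for `k ≥ 0`, and `λ = -ln(1-θ)`, then
`𝐄[Y^p] ≤ C_p θ/λ^{p+1} + 1` with the explicit constant
`C_p = p^{p+1} e^{-p} + Γ(p+1)`, which depends only on `p`. -/
theorem geometric_moment_bound (p : ℝ) (hp : 0 < p) (θ : ℝ)
    (hθ : θ ∈ Set.Ioo (0:ℝ) 1) :
    ∑' k : ℕ, (k : ℝ) ^ p * (1 - θ) ^ k * θ
      ≤ (p ^ (p + 1) * Real.exp (-p) + Real.Gamma (p + 1))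
          * (θ / (-Real.log (1 - θ)) ^ (p + 1)) + 1 := by
  obtain ⟨hθ0, hθ1⟩ := hθ
  have hr0 : 0 < 1 - θ := by linarith
  have hr1 : 1 - θ < 1 := by linarith
  set l : ℝ := -Real.log (1 - θ) with hl_def
  have hl : 0 < l := by
    have := Real.log_neg hr0 hr1
    simp only [hl_def]; linarith
  have hexp : ∀ k : ℕ, Real.exp (-l * (k:ℝ)) = (1 - θ) ^ k := by
    intro k
    rw [show -l * (k:ℝ) = (k:ℝ) * Real.log (1 - θ) by simp [hl_def]; ring,
      Real.exp_nat_mul, Real.exp_log hr0]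
  have hS : ∑' k : ℕ, ((k:ℝ) ^ p * Real.exp (-l * (k:ℝ)))
      ≤ (p / l) ^ p * Real.exp (-p) + Real.Gamma (p + 1) / l ^ (p + 1) := by
    rw [← aux_integral hp hl]
    refine Real.tsum_le_of_sum_range_le
      (fun k => mul_nonneg (Real.rpow_nonneg (Nat.cast_nonneg k) _) (Real.exp_pos _).le)
      (aux_sum_le hp hl)
  have hT : ∑' k : ℕ, (k : ℝ) ^ p * (1 - θ) ^ k * θ
      = (∑' k : ℕ, ((k:ℝ) ^ p * Real.exp (-l * (k:ℝ)))) * θ := by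
    rw [← tsum_mul_right]
    exact tsum_congr fun k => by rw [hexp k]
  rw [hT]
  have hS0 : (0:ℝ) ≤ (p / l) ^ p * Real.exp (-p) + Real.Gamma (p + 1) / l ^ (p + 1) := by
    have h1 : (0:ℝ) ≤ (p / l) ^ p := Real.rpow_nonneg (by positivity) _
    have h2 : (0:ℝ) < Real.Gamma (p + 1) := Real.Gamma_pos_of_pos (by linarith)
    have h3 : (0:ℝ) < l ^ (p + 1) := Real.rpow_pos_of_pos hl _
    positivity
  have hmul : (∑' k : ℕ, ((k:ℝ) ^ p * Real.exp (-l * (k:ℝ)))) * θ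
      ≤ ((p / l) ^ p * Real.exp (-p) + Real.Gamma (p + 1) / l ^ (p + 1)) * θ :=
    mul_le_mul_of_nonneg_right hS hθ0.le
  refine le_trans hmul ?_
  have hlp1 : (0:ℝ) < l ^ (p + 1) := Real.rpow_pos_of_pos hl _
  have hlp : (0:ℝ) < l ^ p := Real.rpow_pos_of_pos hl _
  have hpp : (0:ℝ) < p ^ p := Real.rpow_pos_of_pos hp _
  have hG : (0:ℝ) < Real.Gamma (p + 1) := Real.Gamma_pos_of_pos (by linarith)
  have hdiv : (p / l) ^ p = p ^ p / l ^ p := Real.div_rpow hp.le hl.le p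
  have hsplit_l : l ^ (p + 1) = l ^ p * l := by
    rw [Real.rpow_add hl, Real.rpow_one]
  have hsplit_p : p ^ (p + 1) = p ^ p * p := by
    rw [Real.rpow_add hp, Real.rpow_one]
  have hexp_le : Real.exp (-p) ≤ 1 := by
    rw [Real.exp_le_one_iff]; linarith
  have hexp_pos := Real.exp_pos (-p)
  rcases le_total l p with hcase | hcase
  · -- l ≤ p : absorb sup term into p^(p+1) e^(-p) θ / l^(p+1)
    have key : (p / l) ^ p * Real.exp (-p) ≤ p ^ (p + 1) * Real.exp (-p) / l ^ (p + 1) := by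
      rw [hdiv, hsplit_p, hsplit_l, div_mul_eq_mul_div, div_le_div_iff₀ hlp (by positivity)]
      nlinarith [mul_le_mul_of_nonneg_left (mul_le_mul_of_nonneg_left hcase hlp.le)
        (show (0:ℝ) ≤ p ^ p * Real.exp (-p) by positivity)]
    have expand : ((p / l) ^ p * Real.exp (-p) + Real.Gamma (p + 1) / l ^ (p + 1)) * θ
        ≤ (p ^ (p + 1) * Real.exp (-p) + Real.Gamma (p + 1)) * (θ / l ^ (p + 1)) := by
      have h2 : (p / l) ^ p * Real.exp (-p) + Real.Gamma (p + 1) / l ^ (p + 1)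
          ≤ (p ^ (p + 1) * Real.exp (-p) + Real.Gamma (p + 1)) / l ^ (p + 1) := by
        rw [add_div]
        exact add_le_add key (le_refl _)
      calc ((p / l) ^ p * Real.exp (-p) + Real.Gamma (p + 1) / l ^ (p + 1)) * θ
          ≤ ((p ^ (p + 1) * Real.exp (-p) + Real.Gamma (p + 1)) / l ^ (p + 1)) * θ :=
            mul_le_mul_of_nonneg_right h2 hθ0.le
        _ = (p ^ (p + 1) * Real.exp (-p) + Real.Gamma (p + 1)) * (θ / l ^ (p + 1)) := by
            ring
    linarith
  · -- p ≤ l : sup term ≤ 1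
    have hone : (p / l) ^ p ≤ 1 :=
      Real.rpow_le_one (by positivity) (div_le_one_of_le₀ hcase hl.le) hp.le
    have key1 : (p / l) ^ p * Real.exp (-p) * θ ≤ 1 := by
      have h1 : (p / l) ^ p * Real.exp (-p) ≤ 1 := by nlinarith
      nlinarith [Real.rpow_nonneg (show (0:ℝ) ≤ p / l by positivity) p]
    have key2 : Real.Gamma (p + 1) / l ^ (p + 1) * θ
        ≤ (p ^ (p + 1) * Real.exp (-p) + Real.Gamma (p + 1)) * (θ / l ^ (p + 1)) := by
      have h1 : Real.Gamma (p + 1) ≤ p ^ (p + 1) * Real.exp (-p) + Real.Gamma (p + 1) := by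
        have : (0:ℝ) < p ^ (p + 1) := Real.rpow_pos_of_pos hp _
        nlinarith
      have h2 : 0 ≤ θ / l ^ (p + 1) := by positivity
      calc Real.Gamma (p + 1) / l ^ (p + 1) * θ
          = Real.Gamma (p + 1) * (θ / l ^ (p + 1)) := by ring
        _ ≤ (p ^ (p + 1) * Real.exp (-p) + Real.Gamma (p + 1)) * (θ / l ^ (p + 1)) :=
            mul_le_mul_of_nonneg_right h1 h2
    nlinarith [key1, key2]
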